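/- arXiv:1807.10045 — 2 statements merged into one kernel-verified Lean document; each statement's English description precedes it below -/
import Mathlib

section
/- Right symmetrized bitableaux and Young symmetrizers, multilinear case: let S and T be multilinear tableaux of the same shape λ ⊢ h. Then in the polynomial ring ℂ[M_{h,h}] one has (S|⎕T) = (−1)^(h choose 2) · Σ_{σ∈R(S), τ∈C(T)} sgn(σ) · Π_{k=1}^h x_{(σ θ_{ST} τ)(k), k}. -/
open MvPolynomial

noncomputable section

def e2 : List ℕ → ℕ
  | [] => 0
  | a :: l => a * l.sum + e2 l

def IsShape (h : ℕ) (lam : List ℕ) : Prop :=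
  lam.Pairwise (· ≥ ·) ∧ (∀ a ∈ lam, 0 < a) ∧ lam.sum = h

def biprod (n d : ℕ) (ω : List (Fin n)) (ϖ : List (Fin d)) : MvPolynomial (Fin n × Fin d) ℂ :=
  if hl : ω.length = ϖ.length then
    (-1 : MvPolynomial (Fin n × Fin d) ℂ) ^ (ω.length.choose 2) *
      (Matrix.of fun r s : Fin ω.length =>
        (X (ω.get r, ϖ.get (Fin.cast hl s)) : MvPolynomial (Fin n × Fin d) ℂ)).det
  else 0

def rowWord (n : ℕ) (lam : List ℕ) (T : ℕ → ℕ → Fin n) (r : ℕ) : List (Fin n) :=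
  (List.range (lam.getD r 0)).map (T r)

def bitab (n d : ℕ) (lam : List ℕ) (S : ℕ → ℕ → Fin n) (T : ℕ → ℕ → Fin d) :
    MvPolynomial (Fin n × Fin d) ℂ :=
  (-1 : MvPolynomial (Fin n × Fin d) ℂ) ^ e2 lam *
    ∏ r ∈ Finset.range lam.length, biprod n d (rowWord n lam S r) (rowWord d lam T r)

def IsStandard (n : ℕ) (lam : List ℕ) (T : ℕ → ℕ → Fin n) : Prop :=
  (∀ r c, c + 1 < lam.getD r 0 → T r c < T r (c + 1)) ∧
  (∀ r c, c < lam.getD (r + 1) 0 → T r c ≤ T (r + 1) c)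

/-- the length of column `c` of the shape `lam`: the number of rows containing
a cell in column `c` -/
def colLen (lam : List ℕ) (c : ℕ) : ℕ := lam.countP (fun a => decide (c < a))

/-- `T̄`: the tableau obtained from `T` by applying, within each column `c` of the
shape `lam`, the permutation `π c` of the entries of that column -/
def applyColPerm (d : ℕ) (lam : List ℕ) (T : ℕ → ℕ → Fin d)
    (π : ∀ c : Fin (lam.headD 0), Equiv.Perm (Fin (colLen lam c))) :
    ℕ → ℕ → Fin d := fun r c =>
  if h : c < lam.headD 0 ∧ r < colLen lam c then
    T ((π ⟨c, h.1⟩) ⟨r, h.2⟩ : ℕ) c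
  else T r c

/-- the right symmetrized bitableau `(S|⎕T)`: the sum of `(S|T̄)` over all tuples
of column permutations (with multiplicity) -/
def symmBitab (n d : ℕ) (lam : List ℕ) (S : ℕ → ℕ → Fin n) (T : ℕ → ℕ → Fin d) :
    MvPolynomial (Fin n × Fin d) ℂ :=
  ∑ π : ∀ c : Fin (lam.headD 0), Equiv.Perm (Fin (colLen lam c)),
    bitab n d lam S (applyColPerm d lam T π)

/-- the (row-by-row, 0-indexed) cell number of the cell in row `r`, column `c` -/
def idx (lam : List ℕ) (r c : ℕ) : ℕ := (lam.take r).sum + c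

/-- the row of the `k`-th cell (cells numbered row by row, 0-indexed) -/
def cellRow : List ℕ → ℕ → ℕ
  | [], _ => 0
  | a :: l, k => if k < a then 0 else cellRow l (k - a) + 1

/-- the column of the `k`-th cell -/
def cellCol : List ℕ → ℕ → ℕ
  | [], k => k
  | a :: l, k => if k < a then k else cellCol l (k - a)

/-!
A multilinear tableau of shape `lam ⊢ h` is encoded as a permutation
`S : Equiv.Perm (Fin h)`: the entry in the cell numbered `k` is `S k`.

`σ` belongs to the row group `R(S)` iff every `a` lies in the same row of `S`
as `σ a`, that is, the cells `S⁻¹(σ a)` and `S⁻¹ a` have the same row; likewise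
for the column group `C(T)` with columns.
-/


-- choose-two arithmetic
lemma add_choose_two (a b : ℕ) : (a + b).choose 2 = a.choose 2 + a * b + b.choose 2 := by
  induction b with
  | zero => simp
  | succ b ih =>
      have : a + (b+1) = (a+b) + 1 := by ring
      rw [this, Nat.choose_succ_succ, ih, Nat.choose_succ_succ b 1]
      simp [Nat.choose_one_right]
      ring

lemma e2_choose (lam : List ℕ) :
    lam.sum.choose 2 = e2 lam + ((lam.map fun a => a.choose 2)).sum := by
  induction lam with
  | nil => simp [e2]
  | cons a l ih =>
      simp only [List.sum_cons, List.map_cons, e2, add_choose_two, ih]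
      ring

-- basic cell lemmas
lemma idx_succ (a : ℕ) (l : List ℕ) (r c : ℕ) :
    idx (a :: l) (r+1) c = a + idx l r c := by
  simp [idx, List.take_succ_cons]
  ring

lemma idx_lt (lam : List ℕ) (r c : ℕ) (hc : c < lam.getD r 0) : idx lam r c < lam.sum := by
  induction lam generalizing r with
  | nil => simp at hc
  | cons a l ih =>
      cases r with
      | zero =>
          simp only [List.getD_cons_zero] at hc
          simp only [idx, List.take_zero, List.sum_nil, List.sum_cons, Nat.zero_add]
          omega
      | succ r =>
          simp only [List.getD_cons_succ] at hc
          have := ih r hc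
          rw [idx_succ]
          simp only [List.sum_cons]
          omega

lemma cellRow_idx (lam : List ℕ) (r c : ℕ) (hc : c < lam.getD r 0) :
    cellRow lam (idx lam r c) = r := by
  induction lam generalizing r with
  | nil => simp at hc
  | cons a l ih =>
      cases r with
      | zero =>
          simp only [List.getD_cons_zero] at hc
          have : idx (a :: l) 0 c = c := by simp [idx]
          rw [this, cellRow, if_pos hc]
      | succ r =>
          simp only [List.getD_cons_succ] at hc
          rw [idx_succ, cellRow, if_neg (by omega)]
          have : a + idx l r c - a = idx l r c := by omega
          rw [this, ih r hc]

lemma cellCol_idx (lam : List ℕ) (r c : ℕ) (hc : c < lam.getD r 0) :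
    cellCol lam (idx lam r c) = c := by
  induction lam generalizing r with
  | nil => simp at hc
  | cons a l ih =>
      cases r with
      | zero =>
          simp only [List.getD_cons_zero] at hc
          have : idx (a :: l) 0 c = c := by simp [idx]
          rw [this, cellCol, if_pos hc]
      | succ r =>
          simp only [List.getD_cons_succ] at hc
          rw [idx_succ, cellCol, if_neg (by omega)]
          have : a + idx l r c - a = idx l r c := by omega
          rw [this, ih r hc]

lemma cellCol_lt (lam : List ℕ) (k : ℕ) (hk : k < lam.sum) :
    cellCol lam k < lam.getD (cellRow lam k) 0 := by
  induction lam generalizing k with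
  | nil => simp at hk
  | cons a l ih =>
      by_cases h : k < a
      · rw [cellRow, if_pos h, cellCol, if_pos h]; simpa
      · rw [cellRow, if_neg h, cellCol, if_neg h]
        simp only [List.getD_cons_succ]
        exact ih (k - a) (by simp at hk; omega)

lemma idx_cell (lam : List ℕ) (k : ℕ) (hk : k < lam.sum) :
    idx lam (cellRow lam k) (cellCol lam k) = k := by
  induction lam generalizing k with
  | nil => simp at hk
  | cons a l ih =>
      by_cases h : k < a
      · rw [cellRow, if_pos h, cellCol, if_pos h]; simp [idx]
      · rw [cellRow, if_neg h, cellCol, if_neg h, idx_succ, ih (k-a) (by simp at hk; omega)]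
        omega

lemma cellRow_lt_length (lam : List ℕ) (k : ℕ) (hk : k < lam.sum) :
    cellRow lam k < lam.length := by
  by_contra hcon
  have := cellCol_lt lam k hk
  rw [List.getD_eq_default] at this
  · omega
  · omega

lemma colLen_nil (c : ℕ) : colLen [] c = 0 := rfl

lemma colLen_cons (a : ℕ) (l : List ℕ) (c : ℕ) :
    colLen (a :: l) c = (if c < a then 1 else 0) + colLen l c := by
  simp [colLen, List.countP_cons]
  by_cases h : c < a <;> simp [h] <;> omega

lemma colLen_eq_zero (l : List ℕ) (c : ℕ) (hl : ∀ x ∈ l, x ≤ c) : colLen l c = 0 := by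
  induction l with
  | nil => rfl
  | cons a l ih =>
      rw [colLen_cons, if_neg (by have := hl a (by simp); omega), ih (fun x hx => hl x (by simp [hx]))]

lemma lt_colLen_iff (lam : List ℕ) (hs : lam.Pairwise (· ≥ ·)) (r c : ℕ) :
    r < colLen lam c ↔ c < lam.getD r 0 := by
  induction lam generalizing r with
  | nil => simp [colLen_nil]
  | cons a l ih =>
      have hle : ∀ x ∈ l, x ≤ a := fun x hx => (List.pairwise_cons.mp hs).1 x hx
      have hs' : l.Pairwise (· ≥ ·) := (List.pairwise_cons.mp hs).2
      by_cases hca : c < a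
      · rw [colLen_cons, if_pos hca]
        cases r with
        | zero => simpa using hca
        | succ r =>
            simp only [List.getD_cons_succ]
            rw [← ih hs' r]
            omega
      · have h0 : colLen l c = 0 := colLen_eq_zero l c (fun x hx => by have := hle x hx; omega)
        rw [colLen_cons, if_neg hca, h0]
        simp only [Nat.zero_add]
        cases r with
        | zero => simpa using hca
        | succ r =>
            simp only [List.getD_cons_succ]
            constructor
            · omega
            · intro hcl
              exfalso
              have : r < l.length := by
                by_contra hr
                rw [List.getD_eq_default] at hcl <;> omega
              have : l.getD r 0 ≤ a := by
                rw [List.getD_eq_getElem l 0 ‹r < l.length›]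
                exact hle _ (List.getElem_mem _)
              omega

lemma headD_eq_getD_zero (lam : List ℕ) : lam.headD 0 = lam.getD 0 0 := by
  cases lam <;> rfl

lemma lt_headD (lam : List ℕ) (hs : lam.Pairwise (· ≥ ·)) (r c : ℕ) (hc : c < lam.getD r 0) :
    c < lam.headD 0 := by
  rw [headD_eq_getD_zero, ← lt_colLen_iff lam hs 0 c]
  have := (lt_colLen_iff lam hs r c).mpr hc
  omega

def rowEquiv (lam : List ℕ) (h : ℕ) (hsum : lam.sum = h) :
    Fin h ≃ Σ r : Fin lam.length, Fin (lam.getD (r : ℕ) 0) where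
  toFun m :=
    ⟨⟨cellRow lam m, cellRow_lt_length lam m (hsum ▸ m.isLt)⟩,
     ⟨cellCol lam m, cellCol_lt lam m (hsum ▸ m.isLt)⟩⟩
  invFun x := ⟨idx lam x.1 x.2, hsum ▸ idx_lt lam x.1 x.2 x.2.isLt⟩
  left_inv m := by
    apply Fin.ext
    exact idx_cell lam m (hsum ▸ m.isLt)
  right_inv x := by
    obtain ⟨⟨r, hr⟩, ⟨c, hc⟩⟩ := x
    refine Sigma.ext (Fin.ext ?_) ((Fin.heq_ext_iff ?_).mpr ?_) <;>
      simp only [cellRow_idx lam r c hc, cellCol_idx lam r c hc]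

def colEquiv (lam : List ℕ) (hs : lam.Pairwise (· ≥ ·)) (h : ℕ) (hsum : lam.sum = h) :
    Fin h ≃ Σ c : Fin (lam.headD 0), Fin (colLen lam (c : ℕ)) where
  toFun m :=
    ⟨⟨cellCol lam m, lt_headD lam hs _ _ (cellCol_lt lam m (hsum ▸ m.isLt))⟩,
     ⟨cellRow lam m, (lt_colLen_iff lam hs _ _).mpr (cellCol_lt lam m (hsum ▸ m.isLt))⟩⟩
  invFun x :=
    ⟨idx lam x.2 x.1, hsum ▸ idx_lt lam x.2 x.1 ((lt_colLen_iff lam hs _ _).mp x.2.isLt)⟩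
  left_inv m := by
    apply Fin.ext
    exact idx_cell lam m (hsum ▸ m.isLt)
  right_inv x := by
    obtain ⟨⟨c, hc⟩, ⟨r, hr⟩⟩ := x
    have hcr : c < lam.getD r 0 := (lt_colLen_iff lam hs _ _).mp hr
    refine Sigma.ext (Fin.ext ?_) ((Fin.heq_ext_iff ?_).mpr ?_) <;>
      simp only [cellRow_idx lam r c hcr, cellCol_idx lam r c hcr]

section SigmaPerm

variable {A : Type*} {β : A → Type*}

lemma sigma_eq_of_fst_eq {a : A} (y : Σ a, β a) (hy : y.1 = a) :
    y = ⟨a, cast (congrArg β hy) y.2⟩ := by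
  subst hy
  rfl

lemma exists_sigmaCongrRight (ρ : Equiv.Perm (Σ a, β a)) (hρ : ∀ x, (ρ x).1 = x.1) :
    ∃ g : ∀ a, Equiv.Perm (β a), Equiv.sigmaCongrRight g = ρ := by
  have hρ' : ∀ x : Σ a, β a, (ρ.symm x).1 = x.1 := by
    intro x
    have := hρ (ρ.symm x)
    rw [Equiv.apply_symm_apply] at this; exact this.symm
  let F : ∀ a, β a → β a := fun a b => cast (congrArg β (hρ ⟨a, b⟩)) (ρ ⟨a, b⟩).2
  let G : ∀ a, β a → β a := fun a b => cast (congrArg β (hρ' ⟨a, b⟩)) (ρ.symm ⟨a, b⟩).2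
  have keyF : ∀ a (b : β a), ρ ⟨a, b⟩ = ⟨a, F a b⟩ := fun a b =>
    sigma_eq_of_fst_eq (ρ ⟨a, b⟩) (hρ ⟨a, b⟩)
  have keyG : ∀ a (b : β a), ρ.symm ⟨a, b⟩ = ⟨a, G a b⟩ := fun a b =>
    sigma_eq_of_fst_eq (ρ.symm ⟨a, b⟩) (hρ' ⟨a, b⟩)
  have snd_eq : ∀ a (b b' : β a), (⟨a, b⟩ : Σ a, β a) = ⟨a, b'⟩ → b = b' := by
    intro a b b' hbb
    exact eq_of_heq ((Sigma.mk.inj_iff.mp hbb).2)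
  refine ⟨fun a => ⟨F a, G a, ?_, ?_⟩, ?_⟩
  · intro b
    apply snd_eq a
    rw [← keyG a (F a b), ← keyF a b, Equiv.symm_apply_apply]
  · intro b
    apply snd_eq a
    rw [← keyF a (G a b), ← keyG a b, Equiv.apply_symm_apply]
  · apply Equiv.ext
    rintro ⟨a, b⟩
    rw [Equiv.sigmaCongrRight_apply]
    exact (keyF a b).symm

end SigmaPerm

lemma sigmaCongrRight_mulSingle {A : Type*} [DecidableEq A] {β : A → Type*}
    (a : A) (x : Equiv.Perm (β a)) :
    Equiv.sigmaCongrRight (Pi.mulSingle a x) =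
      x.extendDomain (⟨fun b => ⟨⟨a, b⟩, rfl⟩,
        fun s => s.2 ▸ s.1.2, fun b => rfl,
        fun s => by obtain ⟨⟨a', b⟩, hs⟩ := s; subst hs; rfl⟩ :
          β a ≃ {s : Σ a', β a' // s.1 = a}) := by
  apply Equiv.ext
  rintro ⟨a', b⟩
  by_cases ha : a' = a
  · subst ha
    rw [Equiv.Perm.extendDomain_apply_subtype (f := (⟨fun b => ⟨⟨a', b⟩, rfl⟩,
        fun s => s.2 ▸ s.1.2, fun b => rfl,
        fun s => by obtain ⟨⟨a'', b⟩, hs⟩ := s; subst hs; rfl⟩ :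
          β a' ≃ {s : Σ a'', β a'' // s.1 = a'})) x
        (show (⟨a', b⟩ : Σ a'', β a'').1 = a' from rfl)]
    simp [Pi.mulSingle_eq_same]
  · rw [Equiv.Perm.extendDomain_apply_not_subtype (f := (⟨fun b => ⟨⟨a, b⟩, rfl⟩,
        fun s => s.2 ▸ s.1.2, fun b => rfl,
        fun s => by obtain ⟨⟨a'', b⟩, hs⟩ := s; subst hs; rfl⟩ :
          β a ≃ {s : Σ a'', β a'' // s.1 = a})) x
        (show ¬(⟨a', b⟩ : Σ a'', β a'').1 = a from ha)]
    simp [Pi.mulSingle_eq_of_ne ha]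

lemma sign_sigmaCongrRight {A : Type*} [DecidableEq A] [Fintype A] {β : A → Type*}
    [∀ a, DecidableEq (β a)] [∀ a, Fintype (β a)] (g : ∀ a, Equiv.Perm (β a)) :
    Equiv.Perm.sign (Equiv.sigmaCongrRight g) = ∏ a, Equiv.Perm.sign (g a) := by
  have key : (Equiv.Perm.sign.comp (Equiv.Perm.sigmaCongrRightHom β) :
        (∀ a, Equiv.Perm (β a)) →* ℤˣ) =
      ∏ a : A, Equiv.Perm.sign.comp (Pi.evalMonoidHom (fun a => Equiv.Perm (β a)) a) := by
    apply MonoidHom.pi_ext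
    intro a x
    rw [MonoidHom.comp_apply]
    have h1 : Equiv.Perm.sign ((Equiv.Perm.sigmaCongrRightHom β) (Pi.mulSingle a x)) =
        Equiv.Perm.sign x := by
      show Equiv.Perm.sign (Equiv.sigmaCongrRight (Pi.mulSingle a x)) = _
      rw [sigmaCongrRight_mulSingle]
      exact Equiv.Perm.sign_extendDomain _ _
    rw [h1, MonoidHom.finset_prod_apply]
    rw [Finset.prod_eq_single a (fun b _ hb => by
      simp [Pi.mulSingle_eq_of_ne hb]) (by simp)]
    simp
  have := DFunLike.congr_fun key g
  simpa [MonoidHom.finset_prod_apply] using this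

lemma biprod_expand (n d a : ℕ) (f : ℕ → Fin n) (g : ℕ → Fin d) :
    biprod n d ((List.range a).map f) ((List.range a).map g) =
      (-1 : MvPolynomial (Fin n × Fin d) ℂ) ^ (a.choose 2) *
        ∑ q : Equiv.Perm (Fin a),
          ((Equiv.Perm.sign q : ℤ) : MvPolynomial (Fin n × Fin d) ℂ) *
            ∏ s : Fin a, X (f (q s), g s) := by
  have hf : ((List.range a).map f).length = a := by simp
  have hl : ((List.range a).map f).length = ((List.range a).map g).length := by simp
  rw [biprod, dif_pos hl]
  congr 1
  · rw [hf]
  · rw [← Matrix.det_reindex_self (finCongr hf)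
      (Matrix.of fun r s : Fin ((List.range a).map f).length =>
        (X (((List.range a).map f).get r, ((List.range a).map g).get (Fin.cast hl s)) :
          MvPolynomial (Fin n × Fin d) ℂ))]
    rw [Matrix.det_apply]
    apply Finset.sum_congr rfl
    intro q _
    rw [Units.smul_def, zsmul_eq_mul]
    congr 1
    apply Finset.prod_congr rfl
    intro s _
    simp [Matrix.reindex_apply, List.get_eq_getElem]

lemma map_sum_eq (φ : ℕ → ℕ) (l : List ℕ) :
    (l.map φ).sum = ∑ r ∈ Finset.range l.length, φ (l.getD r 0) := by
  induction l with
  | nil => simp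
  | cons a l ih =>
      rw [List.map_cons, List.sum_cons, ih, List.length_cons, Finset.sum_range_succ']
      simp [add_comm]

lemma bitab_expand (n d : ℕ) (lam : List ℕ) (U : ℕ → ℕ → Fin n) (W : ℕ → ℕ → Fin d) :
    bitab n d lam U W =
      (-1 : MvPolynomial (Fin n × Fin d) ℂ) ^ (lam.sum.choose 2) *
        ∑ g : ∀ r : Fin lam.length, Equiv.Perm (Fin (lam.getD (r : ℕ) 0)),
          (((∏ r, Equiv.Perm.sign (g r) : ℤˣ) : ℤ) : MvPolynomial (Fin n × Fin d) ℂ) *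
            ∏ x : Σ r : Fin lam.length, Fin (lam.getD (r : ℕ) 0),
              X (U x.1 (g x.1 x.2), W x.1 x.2) := by
  rw [bitab]
  have step1 : ∏ r ∈ Finset.range lam.length,
      biprod n d (rowWord n lam U r) (rowWord d lam W r) =
      ∏ r ∈ Finset.range lam.length,
        ((-1 : MvPolynomial (Fin n × Fin d) ℂ) ^ ((lam.getD r 0).choose 2) *
          ∑ q : Equiv.Perm (Fin (lam.getD r 0)),
            ((Equiv.Perm.sign q : ℤ) : MvPolynomial (Fin n × Fin d) ℂ) *
              ∏ s : Fin (lam.getD r 0), X (U r (q s), W r s)) :=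
    Finset.prod_congr rfl fun r _ => biprod_expand n d (lam.getD r 0) (U r) (W r)
  rw [step1, Finset.prod_mul_distrib, Finset.prod_pow_eq_pow_sum, ← mul_assoc, ← pow_add]
  have hsign : e2 lam + ∑ i ∈ Finset.range lam.length, (lam.getD i 0).choose 2
      = lam.sum.choose 2 := by
    rw [← map_sum_eq (fun a => a.choose 2) lam]
    exact (e2_choose lam).symm
  rw [hsign]
  congr 1
  rw [← Fin.prod_univ_eq_prod_range (fun r =>
    ∑ q : Equiv.Perm (Fin (lam.getD r 0)),
      ((Equiv.Perm.sign q : ℤ) : MvPolynomial (Fin n × Fin d) ℂ) *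
        ∏ s : Fin (lam.getD r 0), X (U r (q s), W r s)) lam.length]
  rw [Fintype.prod_sum]
  apply Finset.sum_congr rfl
  intro g _
  rw [Finset.prod_mul_distrib]
  congr 1
  · push_cast
    rfl
  · rw [← Finset.univ_sigma_univ, Finset.prod_sigma]

lemma lhs_eq (h : ℕ) (lam : List ℕ) (hs : lam.Pairwise (· ≥ ·)) (hsum : lam.sum = h)
    (S T : Equiv.Perm (Fin h)) (U V : ℕ → ℕ → Fin h)
    (hU : ∀ r c (_ : c < lam.getD r 0) (hi : idx lam r c < h), U r c = S ⟨idx lam r c, hi⟩)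
    (hV : ∀ r c (_ : c < lam.getD r 0) (hi : idx lam r c < h), V r c = T ⟨idx lam r c, hi⟩) :
    symmBitab h h lam U V =
      (-1 : MvPolynomial (Fin h × Fin h) ℂ) ^ (h.choose 2) *
        ∑ p : ∀ c : Fin (lam.headD 0), Equiv.Perm (Fin (colLen lam (c : ℕ))),
        ∑ g : ∀ r : Fin lam.length, Equiv.Perm (Fin (lam.getD (r : ℕ) 0)),
          (((∏ r, Equiv.Perm.sign (g r) : ℤˣ) : ℤ) : MvPolynomial (Fin h × Fin h) ℂ) *
            ∏ m : Fin h,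
              X (S ((rowEquiv lam h hsum).symm
                      (Equiv.sigmaCongrRight g ((rowEquiv lam h hsum) m))),
                 T ((colEquiv lam hs h hsum).symm
                      (Equiv.sigmaCongrRight p ((colEquiv lam hs h hsum) m)))) := by
  rw [symmBitab, Finset.mul_sum]
  apply Finset.sum_congr rfl
  intro p _
  rw [bitab_expand, hsum, Finset.mul_sum, Finset.mul_sum]
  apply Finset.sum_congr rfl
  intro g _
  congr 1
  rw [← Equiv.prod_comp (rowEquiv lam h hsum)
    (fun x : Σ r : Fin lam.length, Fin (lam.getD (r : ℕ) 0) =>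
      (X (U x.1 (g x.1 x.2), applyColPerm h lam V p x.1 x.2) :
        MvPolynomial (Fin h × Fin h) ℂ))]
  congr 1
  apply Finset.prod_congr rfl
  intro m _
  have e := rowEquiv lam h hsum
  set x := (rowEquiv lam h hsum) m with hx
  -- row coordinate facts
  have hrow : ((x.1 : ℕ)) = cellRow lam m := rfl
  have hcol : ((x.2 : ℕ)) = cellCol lam m := rfl
  have hc1 : (↑(g x.1 x.2) : ℕ) < lam.getD (x.1 : ℕ) 0 := (g x.1 x.2).isLt
  have hi1 : idx lam (x.1 : ℕ) (↑(g x.1 x.2)) < h :=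
    hsum ▸ idx_lt lam _ _ hc1
  -- column side
  have hc : (x.2 : ℕ) < lam.getD (x.1 : ℕ) 0 := x.2.isLt
  have hcond : (x.2 : ℕ) < lam.headD 0 ∧ (x.1 : ℕ) < colLen lam (x.2 : ℕ) :=
    ⟨lt_headD lam hs _ _ hc, (lt_colLen_iff lam hs _ _).mpr hc⟩
  have happ : applyColPerm h lam V p (x.1 : ℕ) (x.2 : ℕ) =
      V ((p ⟨(x.2 : ℕ), hcond.1⟩ ⟨(x.1 : ℕ), hcond.2⟩ : ℕ)) (x.2 : ℕ) := by
    rw [applyColPerm, dif_pos hcond]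
  set r' := ((p ⟨(x.2 : ℕ), hcond.1⟩ ⟨(x.1 : ℕ), hcond.2⟩ : ℕ)) with hr'
  have hc2 : (x.2 : ℕ) < lam.getD r' 0 :=
    (lt_colLen_iff lam hs r' _).mp (Fin.isLt _)
  have hi2 : idx lam r' (x.2 : ℕ) < h := hsum ▸ idx_lt lam _ _ hc2
  rw [hU (x.1 : ℕ) (↑(g x.1 x.2)) hc1 hi1, happ, hV r' (x.2 : ℕ) hc2 hi2]
  rfl

lemma sigmaCongrRight_inj {A : Type*} {β : A → Type*} (g g' : ∀ a, Equiv.Perm (β a))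
    (hgg : Equiv.sigmaCongrRight g = Equiv.sigmaCongrRight g') : g = g' := by
  funext a
  apply Equiv.ext
  intro b
  have := congrArg (fun q => q ⟨a, b⟩) (congrArg (fun (q : Equiv.Perm (Σ a, β a)) => (q : (Σ a, β a) → (Σ a, β a))) hgg)
  simp only [Equiv.sigmaCongrRight_apply] at this
  exact eq_of_heq (Sigma.mk.inj_iff.mp this).2

section Main

variable (lam : List ℕ) (hs : lam.Pairwise (· ≥ ·)) (h : ℕ) (hsum : lam.sum = h)

def rowPerm (g : ∀ r : Fin lam.length, Equiv.Perm (Fin (lam.getD (r : ℕ) 0))) :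
    Equiv.Perm (Fin h) :=
  ((rowEquiv lam h hsum).symm).permCongr (Equiv.sigmaCongrRight g)

def colPerm (p : ∀ c : Fin (lam.headD 0), Equiv.Perm (Fin (colLen lam (c : ℕ)))) :
    Equiv.Perm (Fin h) :=
  ((colEquiv lam hs h hsum).symm).permCongr (Equiv.sigmaCongrRight p)

lemma rowPerm_apply (g) (m : Fin h) :
    rowPerm lam h hsum g m =
      (rowEquiv lam h hsum).symm (Equiv.sigmaCongrRight g ((rowEquiv lam h hsum) m)) := rfl

lemma colPerm_apply (p) (m : Fin h) :
    colPerm lam hs h hsum p m =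
      (colEquiv lam hs h hsum).symm (Equiv.sigmaCongrRight p ((colEquiv lam hs h hsum) m)) := rfl

lemma cellRow_rowPerm (g) (m : Fin h) :
    cellRow lam ((rowPerm lam h hsum g m : Fin h) : ℕ) = cellRow lam (m : ℕ) := by
  rw [rowPerm_apply]
  set x := (rowEquiv lam h hsum) m with hx
  show cellRow lam (idx lam (x.1 : ℕ) _) = _
  rw [cellRow_idx lam (x.1 : ℕ) _ (Fin.isLt ((Equiv.sigmaCongrRight g) x).snd)]
  rfl

lemma cellCol_colPerm (p) (m : Fin h) :
    cellCol lam ((colPerm lam hs h hsum p m : Fin h) : ℕ) = cellCol lam (m : ℕ) := by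
  rw [colPerm_apply]
  set x := (colEquiv lam hs h hsum) m with hx
  show cellCol lam (idx lam _ (x.1 : ℕ)) = _
  rw [cellCol_idx lam _ (x.1 : ℕ) ((lt_colLen_iff lam hs _ _).mp (Fin.isLt ((Equiv.sigmaCongrRight p) x).snd))]
  rfl

lemma rowPerm_inj : Function.Injective (rowPerm lam h hsum) := by
  intro g g' hgg
  apply sigmaCongrRight_inj
  have := congrArg (fun q => ((rowEquiv lam h hsum).symm).permCongr.symm q) hgg
  simpa [rowPerm] using this

lemma colPerm_inj : Function.Injective (colPerm lam hs h hsum) := by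
  intro p p' hpp
  apply sigmaCongrRight_inj
  have := congrArg (fun q => ((colEquiv lam hs h hsum).symm).permCongr.symm q) hpp
  simpa [colPerm] using this

lemma rowPerm_surj (ρ : Equiv.Perm (Fin h))
    (hρ : ∀ m : Fin h, cellRow lam ((ρ m : Fin h) : ℕ) = cellRow lam (m : ℕ)) :
    ∃ g, rowPerm lam h hsum g = ρ := by
  set e := rowEquiv lam h hsum with he
  have hfst : ∀ x, ((e.permCongr ρ) x).1 = x.1 := by
    intro x
    apply Fin.ext
    show cellRow lam ((ρ (e.symm x) : Fin h) : ℕ) = _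
    rw [hρ (e.symm x)]
    show cellRow lam (idx lam (x.1 : ℕ) (x.2 : ℕ)) = _
    rw [cellRow_idx lam _ _ (Fin.isLt _)]
  obtain ⟨g, hg⟩ := exists_sigmaCongrRight (e.permCongr ρ) hfst
  refine ⟨g, ?_⟩
  rw [rowPerm, hg]
  apply Equiv.ext
  intro m
  simp [he]

lemma colPerm_surj (κ : Equiv.Perm (Fin h))
    (hκ : ∀ m : Fin h, cellCol lam ((κ m : Fin h) : ℕ) = cellCol lam (m : ℕ)) :
    ∃ p, colPerm lam hs h hsum p = κ := by
  set f := colEquiv lam hs h hsum with hf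
  have hfst : ∀ x, ((f.permCongr κ) x).1 = x.1 := by
    intro x
    apply Fin.ext
    show cellCol lam ((κ (f.symm x) : Fin h) : ℕ) = _
    rw [hκ (f.symm x)]
    show cellCol lam (idx lam (x.2 : ℕ) (x.1 : ℕ)) = _
    rw [cellCol_idx lam _ _ ((lt_colLen_iff lam hs _ _).mp (Fin.isLt _))]
  obtain ⟨p, hp⟩ := exists_sigmaCongrRight (f.permCongr κ) hfst
  refine ⟨p, ?_⟩
  rw [colPerm, hp]
  apply Equiv.ext
  intro m
  simp [hf]

end Main

lemma rhs_eq (lam : List ℕ) (hs : lam.Pairwise (· ≥ ·)) (h : ℕ) (hsum : lam.sum = h)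
    (S T : Equiv.Perm (Fin h)) :
    (∑ p : ∀ c : Fin (lam.headD 0), Equiv.Perm (Fin (colLen lam (c : ℕ))),
      ∑ g : ∀ r : Fin lam.length, Equiv.Perm (Fin (lam.getD (r : ℕ) 0)),
        (((∏ r, Equiv.Perm.sign (g r) : ℤˣ) : ℤ) : MvPolynomial (Fin h × Fin h) ℂ) *
          ∏ m : Fin h,
            X (S (rowPerm lam h hsum g m), T (colPerm lam hs h hsum p m))) =
      ∑ σ ∈ Finset.univ.filter
          (fun σ : Equiv.Perm (Fin h) =>
            ∀ a, cellRow lam (S.symm (σ a)) = cellRow lam (S.symm a)),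
        ∑ τ ∈ Finset.univ.filter
            (fun τ : Equiv.Perm (Fin h) =>
              ∀ a, cellCol lam (T.symm (τ a)) = cellCol lam (T.symm a)),
          ((Equiv.Perm.sign σ : ℤ) : MvPolynomial (Fin h × Fin h) ℂ) *
            ∏ k : Fin h, X (σ (S (T.symm (τ k))), k) := by
  rw [Finset.sum_comm]
  refine Finset.sum_bij (fun g _ => S * rowPerm lam h hsum g * S⁻¹) ?_ ?_ ?_ ?_
  · intro g _
    rw [Finset.mem_filter]
    refine ⟨Finset.mem_univ _, fun a => ?_⟩
    simp only [Equiv.Perm.mul_apply]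
    rw [show (S⁻¹ : Equiv.Perm (Fin h)) a = S.symm a from rfl]
    rw [show S.symm (S (rowPerm lam h hsum g (S.symm a))) = rowPerm lam h hsum g (S.symm a) by simp]
    exact cellRow_rowPerm lam h hsum g (S.symm a)
  · intro g _ g' _ hgg
    apply rowPerm_inj lam h hsum
    have h1 := mul_left_cancel (mul_right_cancel hgg)
    exact h1
  · intro σ hσ
    rw [Finset.mem_filter] at hσ
    have hρ : ∀ m : Fin h, cellRow lam ((S⁻¹ * σ * S) m : ℕ) = cellRow lam (m : ℕ) := by
      intro m
      have := hσ.2 (S m)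
      simp only [Equiv.Perm.mul_apply]
      rw [show (S⁻¹ : Equiv.Perm (Fin h)) (σ (S m)) = S.symm (σ (S m)) from rfl, this]
      simp
    obtain ⟨g, hg⟩ := rowPerm_surj lam h hsum (S⁻¹ * σ * S) hρ
    refine ⟨g, Finset.mem_univ _, ?_⟩
    show S * rowPerm lam h hsum g * S⁻¹ = σ
    rw [hg]
    group
  · intro g _
    refine Finset.sum_bij (fun p _ => T * (colPerm lam hs h hsum p)⁻¹ * T⁻¹) ?_ ?_ ?_ ?_
    · intro p _
      rw [Finset.mem_filter]
      refine ⟨Finset.mem_univ _, fun a => ?_⟩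
      simp only [Equiv.Perm.mul_apply]
      rw [show (T⁻¹ : Equiv.Perm (Fin h)) a = T.symm a from rfl]
      rw [show T.symm (T ((colPerm lam hs h hsum p)⁻¹ (T.symm a)))
            = (colPerm lam hs h hsum p)⁻¹ (T.symm a) by simp]
      set κ := colPerm lam hs h hsum p with hκdef
      have hκ := cellCol_colPerm lam hs h hsum p
      have : cellCol lam ((κ (κ⁻¹ (T.symm a))) : ℕ) = cellCol lam ((κ⁻¹ (T.symm a) : Fin h) : ℕ) :=
        hκ _
      rw [show κ (κ⁻¹ (T.symm a)) = T.symm a by simp] at this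
      exact this.symm
    · intro p _ p' _ hpp
      apply colPerm_inj lam hs h hsum
      have h1 := mul_left_cancel (mul_right_cancel hpp)
      exact inv_injective h1
    · intro τ hτ
      rw [Finset.mem_filter] at hτ
      have hκ : ∀ m : Fin h, cellCol lam ((T⁻¹ * τ⁻¹ * T) m : ℕ) = cellCol lam (m : ℕ) := by
        intro m
        have := hτ.2 (τ⁻¹ (T m))
        simp only [Equiv.Perm.mul_apply]
        rw [show (τ : Equiv.Perm (Fin h)) (τ⁻¹ (T m)) = T m by simp] at this
        rw [show T.symm (T m) = m by simp] at this
        rw [show (T⁻¹ : Equiv.Perm (Fin h)) (τ⁻¹ (T m)) = T.symm (τ⁻¹ (T m)) from rfl]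
        exact this.symm
      obtain ⟨p, hp⟩ := colPerm_surj lam hs h hsum (T⁻¹ * τ⁻¹ * T) hκ
      refine ⟨p, Finset.mem_univ _, ?_⟩
      show T * (colPerm lam hs h hsum p)⁻¹ * T⁻¹ = τ
      rw [hp]
      group
    · intro p _
      have hsig : Equiv.Perm.sign (S * rowPerm lam h hsum g * S⁻¹) =
          ∏ r, Equiv.Perm.sign (g r) := by
        rw [Equiv.Perm.sign_mul, Equiv.Perm.sign_mul]
        rw [show Equiv.Perm.sign (rowPerm lam h hsum g) = ∏ r, Equiv.Perm.sign (g r) by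
          rw [rowPerm, Equiv.Perm.sign_permCongr, sign_sigmaCongrRight]]
        have : Equiv.Perm.sign (S⁻¹ : Equiv.Perm (Fin h)) = Equiv.Perm.sign S := by simp
        rw [this, mul_comm (Equiv.Perm.sign S) _, mul_assoc]
        simp
      rw [hsig]
      congr 1
      set κ := colPerm lam hs h hsum p with hκdef
      set ρ := rowPerm lam h hsum g with hρdef
      rw [← Equiv.prod_comp (κ.trans T)
        (fun k => (X ((S * ρ * S⁻¹) (S (T.symm ((T * κ⁻¹ * T⁻¹) k))), k) :
          MvPolynomial (Fin h × Fin h) ℂ))]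
      apply Finset.prod_congr rfl
      intro m _
      simp only [Equiv.trans_apply, Equiv.Perm.mul_apply]
      congr 2
      · rw [show (T⁻¹ : Equiv.Perm (Fin h)) (T (κ m)) = κ m by simp]
        rw [show (κ⁻¹ : Equiv.Perm (Fin h)) (κ m) = m by simp]
        rw [show T.symm (T m) = m by simp]
        rw [show (S⁻¹ : Equiv.Perm (Fin h)) (S m) = m by simp]
/-- right symmetrized bitableaux and Young symmetrizers, the
multilinear case: for multilinear tableaux `S, T` of the same shape `λ ⊢ h`,
in `ℂ[M_{h,h}]` one has
`(S|⎕T) = (−1)^(h choose 2) · Σ_{σ∈R(S), τ∈C(T)} sgn(σ) · Π_k x_{(σ θ_{ST} τ)(k), k}`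
where `θ_{ST} = S ∘ T⁻¹`. Here `U, V : ℕ → ℕ → Fin h` are the cellwise
function encodings of the multilinear tableaux `S, T`. -/
theorem symmBitab_eq_youngSymmetrizer_multilinear (h : ℕ)
    (lam : List ℕ) (hlam : IsShape h lam)
    (S T : Equiv.Perm (Fin h))
    (U V : ℕ → ℕ → Fin h)
    (hU : ∀ r c (_ : c < lam.getD r 0) (hi : idx lam r c < h), U r c = S ⟨idx lam r c, hi⟩)
    (hV : ∀ r c (_ : c < lam.getD r 0) (hi : idx lam r c < h), V r c = T ⟨idx lam r c, hi⟩) :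
    symmBitab h h lam U V =
      (-1 : MvPolynomial (Fin h × Fin h) ℂ) ^ h.choose 2 *
        ∑ σ ∈ Finset.univ.filter
            (fun σ : Equiv.Perm (Fin h) =>
              ∀ a, cellRow lam (S.symm (σ a)) = cellRow lam (S.symm a)),
          ∑ τ ∈ Finset.univ.filter
              (fun τ : Equiv.Perm (Fin h) =>
                ∀ a, cellCol lam (T.symm (τ a)) = cellCol lam (T.symm a)),
            ((Equiv.Perm.sign σ : ℤ) : MvPolynomial (Fin h × Fin h) ℂ) *
              ∏ k : Fin h, X (σ (S (T.symm (τ k))), k) := by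
  obtain ⟨hs, hpos, hsum⟩ := hlam
  rw [lhs_eq h lam hs hsum S T U V hU hV]
  congr 1
  exact rhs_eq lam hs h hsum S T

end
end

section
/- Well-definedness of the immanant operator: for every natural number h, every class function χ on the symmetric group S_h, and all positive integers n, d, there exists a linear endomorphism IMM_χ of the h-th homogeneous component ℂ_h[M_{n,d}] such that IMM_χ( Π_{k=1}^h x_{i_k j_k} ) = Σ_{σ∈S_h} χ(σ) · Π_{k=1}^h x_{i_{σ(k)} j_k} for every i = (i_1,…,i_h) ∈ {1,…,n}^h and j = (j_1,…,j_h) ∈ {1,…,d}^h. -/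
/-!
STATEMENT 13: Well-definedness of the immanant operator: for every `h : ℕ`,
every class function `χ` on `S_h` and all positive `n, d`, there is a linear
endomorphism `IMM_χ` of `ℂ_h[M_{n,d}]` with
`IMM_χ(Π_k x_{i_k j_k}) = Σ_σ χ(σ) · Π_k x_{i_{σ(k)} j_k}` for all
`i ∈ {1,…,n}^h`, `j ∈ {1,…,d}^h`.
-/


open MvPolynomial

noncomputable section

namespace ImmAux

lemma exists_perm_comp {α : Type*} : ∀ (h : ℕ) (f g : Fin h → α),
    Multiset.map f Finset.univ.val = Multiset.map g Finset.univ.val →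
    ∃ σ : Equiv.Perm (Fin h), ∀ x, f (σ x) = g x := by
  intro h
  induction h with
  | zero => exact fun f g _ => ⟨1, fun x => x.elim0⟩
  | succ m ih =>
    intro f g H
    have hg0 : g 0 ∈ Multiset.map f Finset.univ.val := by
      rw [H]; exact Multiset.mem_map_of_mem _ (Finset.mem_univ_val _)
    obtain ⟨k, -, hk⟩ := Multiset.mem_map.mp hg0
    set τ : Equiv.Perm (Fin (m+1)) := Equiv.swap 0 k with hτ
    have hmap : Multiset.map (f ∘ τ) Finset.univ.val = Multiset.map g Finset.univ.val := by
      rw [← Multiset.map_map]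
      rw [show Multiset.map (⇑τ) Finset.univ.val = Finset.univ.val from
        Multiset.map_univ_val_equiv τ]
      exact H
    have huniv : (Finset.univ : Finset (Fin (m+1))).val
        = 0 ::ₘ Multiset.map Fin.succ Finset.univ.val := by
      rw [Fin.univ_succ, Finset.cons_val, Finset.map_val]; rfl
    rw [huniv, Multiset.map_cons, Multiset.map_cons, Multiset.map_map, Multiset.map_map] at hmap
    have hfτ0 : (f ∘ τ) 0 = g 0 := by simp [hτ, Equiv.swap_apply_left, hk]
    rw [hfτ0] at hmap
    have hmap' := (Multiset.cons_inj_right _).mp hmap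
    obtain ⟨σ0, hσ0⟩ := ih ((f ∘ τ) ∘ Fin.succ) (g ∘ Fin.succ) hmap'
    refine ⟨(Equiv.Perm.decomposeFin.symm (0, σ0)).trans τ, fun x => ?_⟩
    refine Fin.cases ?_ (fun y => ?_) x
    · simp [Equiv.Perm.decomposeFin_symm_apply_zero, hτ, Equiv.swap_apply_left, hk]
    · have := hσ0 y
      simpa [Equiv.Perm.decomposeFin_symm_apply_succ, Equiv.swap_apply_left] using this

lemma sum_single_eq {α : Type*} [DecidableEq α] {h : ℕ} (g : Fin h → α) :
    ∑ k : Fin h, Finsupp.single (g k) 1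
      = Multiset.toFinsupp (Multiset.map g Finset.univ.val) := by
  have h1 : Multiset.map g Finset.univ.val = ∑ k : Fin h, ({g k} : Multiset α) := by
    rw [← Finset.sum_multiset_singleton (Finset.univ : Finset (Fin h)),
      ← Multiset.coe_mapAddMonoidHom, map_sum]
    simp
  rw [h1, map_sum]
  simp [Multiset.toFinsupp_singleton]

lemma prod_X_eq {σ : Type*} {h : ℕ} (g : Fin h → σ) :
    (∏ k : Fin h, X (g k) : MvPolynomial σ ℂ)
      = monomial (∑ k : Fin h, Finsupp.single (g k) 1) 1 := by
  rw [monomial_sum_one]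
  rfl

lemma target_eq {h n d : ℕ} (χ : Equiv.Perm (Fin h) → ℂ)
    (hχ : ∀ σ τ : Equiv.Perm (Fin h), χ (τ * σ * τ⁻¹) = χ σ)
    (i : Fin h → Fin n) (j : Fin h → Fin d) (i' : Fin h → Fin n) (j' : Fin h → Fin d)
    (π : Equiv.Perm (Fin h))
    (hij : ∀ k, (i (π k), j (π k)) = (i' k, j' k)) :
    (∑ σ : Equiv.Perm (Fin h), χ σ • ∏ k : Fin h, X (i' (σ k), j' k) :
        MvPolynomial (Fin n × Fin d) ℂ)
      = ∑ σ : Equiv.Perm (Fin h), χ σ • ∏ k : Fin h, X (i (σ k), j k) := by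
  have hi : ∀ k, i (π k) = i' k := fun k => congrArg Prod.fst (hij k)
  have hj : ∀ k, j (π k) = j' k := fun k => congrArg Prod.snd (hij k)
  refine Fintype.sum_equiv
    ((Equiv.mulLeft π).trans (Equiv.mulRight π⁻¹)) _ _ (fun σ => ?_)
  have hμ : ((Equiv.mulLeft π).trans (Equiv.mulRight π⁻¹)) σ = π * σ * π⁻¹ := rfl
  rw [hμ, hχ σ π]
  congr 1
  have := Equiv.prod_comp π (fun k => (X (i ((π * σ * π⁻¹) k), j k) :
    MvPolynomial (Fin n × Fin d) ℂ))
  rw [← this]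
  refine Finset.prod_congr rfl (fun k _ => ?_)
  have h1 : (π * σ * π⁻¹) (π k) = π (σ k) := by
    simp [Equiv.Perm.mul_apply]
  rw [h1, hi (σ k), hj k]

def Fmap {n d : ℕ} (h : ℕ) (χ : Equiv.Perm (Fin h) → ℂ)
    (m : (Fin n × Fin d) →₀ ℕ) : MvPolynomial (Fin n × Fin d) ℂ :=
  if H : ∃ p : (Fin h → Fin n) × (Fin h → Fin d),
      m = ∑ k : Fin h, Finsupp.single (p.1 k, p.2 k) 1 then
    ∑ σ : Equiv.Perm (Fin h), χ σ • ∏ k : Fin h, X (H.choose.1 (σ k), H.choose.2 k)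
  else 0

lemma Fmap_spec {n d h : ℕ} (χ : Equiv.Perm (Fin h) → ℂ)
    (hχ : ∀ σ τ : Equiv.Perm (Fin h), χ (τ * σ * τ⁻¹) = χ σ)
    (i : Fin h → Fin n) (j : Fin h → Fin d) :
    Fmap h χ (∑ k : Fin h, Finsupp.single (i k, j k) 1)
      = ∑ σ : Equiv.Perm (Fin h), χ σ • ∏ k : Fin h, X (i (σ k), j k) := by
  have H : ∃ p : (Fin h → Fin n) × (Fin h → Fin d),
      (∑ k : Fin h, Finsupp.single (i k, j k) 1)
        = ∑ k : Fin h, Finsupp.single (p.1 k, p.2 k) 1 := ⟨(i, j), rfl⟩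
  rw [Fmap, dif_pos H]
  have hspec := H.choose_spec
  set i' := H.choose.1
  set j' := H.choose.2
  have hms : Multiset.map (fun k => (i k, j k)) Finset.univ.val
      = Multiset.map (fun k => (i' k, j' k)) Finset.univ.val := by
    apply Multiset.toFinsupp.injective
    rw [← sum_single_eq, ← sum_single_eq]
    exact hspec
  obtain ⟨π, hπ⟩ := exists_perm_comp h (fun k => (i k, j k)) (fun k => (i' k, j' k)) hms
  exact target_eq χ hχ i j i' j' π hπ

lemma Fmap_mem {n d h : ℕ} (χ : Equiv.Perm (Fin h) → ℂ) (m : (Fin n × Fin d) →₀ ℕ) :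
    Fmap h χ m ∈ homogeneousSubmodule (Fin n × Fin d) ℂ h := by
  rw [Fmap]
  by_cases H : ∃ p : (Fin h → Fin n) × (Fin h → Fin d),
      m = ∑ k : Fin h, Finsupp.single (p.1 k, p.2 k) 1
  · rw [dif_pos H]
    refine Submodule.sum_mem _ (fun σ _ => Submodule.smul_mem _ _ ?_)
    rw [mem_homogeneousSubmodule]
    have := MvPolynomial.IsHomogeneous.prod Finset.univ
      (fun k : Fin h => (X (H.choose.1 (σ k), H.choose.2 k) :
        MvPolynomial (Fin n × Fin d) ℂ)) (fun _ => 1)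
      (fun k _ => isHomogeneous_X _ _)
    simpa using this
  · rw [dif_neg H]; exact Submodule.zero_mem _

end ImmAux

theorem imm_operator_well_defined (h : ℕ) (χ : Equiv.Perm (Fin h) → ℂ)
    (hχ : ∀ σ τ : Equiv.Perm (Fin h), χ (τ * σ * τ⁻¹) = χ σ)
    (n d : ℕ) (hn : 0 < n) (hd : 0 < d) :
    ∃ IMM : MvPolynomial.homogeneousSubmodule (Fin n × Fin d) ℂ h →ₗ[ℂ]
        MvPolynomial.homogeneousSubmodule (Fin n × Fin d) ℂ h,
      ∀ (i : Fin h → Fin n) (j : Fin h → Fin d)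
        (p : MvPolynomial.homogeneousSubmodule (Fin n × Fin d) ℂ h),
        (p : MvPolynomial (Fin n × Fin d) ℂ) = ∏ k : Fin h, X (i k, j k) →
        (IMM p : MvPolynomial (Fin n × Fin d) ℂ) =
          ∑ σ : Equiv.Perm (Fin h), C (χ σ) * ∏ k : Fin h, X (i (σ k), j k) := by
  classical
  set S := MvPolynomial.homogeneousSubmodule (Fin n × Fin d) ℂ h with hS
  set T : MvPolynomial (Fin n × Fin d) ℂ →ₗ[ℂ] MvPolynomial (Fin n × Fin d) ℂ :=
    (basisMonomials (Fin n × Fin d) ℂ).constr ℂ (ImmAux.Fmap h χ) with hT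
  have hTmem : ∀ p, T p ∈ S := by
    intro p
    have hmem : T p ∈ LinearMap.range T := ⟨p, rfl⟩
    rw [hT, Module.Basis.constr_range] at hmem
    refine Submodule.span_le.mpr ?_ hmem
    rintro q ⟨m, rfl⟩
    exact ImmAux.Fmap_mem χ m
  refine ⟨(LinearMap.codRestrict S T hTmem).comp S.subtype, fun i j p hp => ?_⟩
  have hcoe : ((LinearMap.codRestrict S T hTmem).comp S.subtype p :
      MvPolynomial (Fin n × Fin d) ℂ) = T (p : MvPolynomial (Fin n × Fin d) ℂ) := rfl
  rw [hcoe, hp, ImmAux.prod_X_eq]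
  have hb : (monomial (∑ k : Fin h, Finsupp.single (i k, j k) 1) 1 :
      MvPolynomial (Fin n × Fin d) ℂ)
      = basisMonomials (Fin n × Fin d) ℂ (∑ k : Fin h, Finsupp.single (i k, j k) 1) := by
    rw [coe_basisMonomials]
  rw [hb, hT, Module.Basis.constr_basis, ImmAux.Fmap_spec χ hχ i j]
  refine Finset.sum_congr rfl (fun σ _ => ?_)
  rw [MvPolynomial.smul_eq_C_mul]

end
end
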